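/- For every d ≥ 1 and all x, y in the simplex S_d, ∫₀¹ ‖Ψ(u, x) − Ψ(u, y)‖₂² du ≤ 2 d^{3/2} ‖x − y‖₂, where ‖·‖₂ denotes the Euclidean norm on ℝ^d. -/

import Mathlib

open MeasureTheory

/-- Partial sum `S_i^x = x_1 + ⋯ + x_i` of the first `i` coordinates of `x : ℝ^d`. -/
def partSum {d : ℕ} (x : Fin d → ℝ) (i : ℕ) : ℝ :=
  ∑ j ∈ Finset.univ.filter (fun j : Fin d => (j : ℕ) < i), x j

/-- The vector field `Ψ(u, x)` whose `i`-th component is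
`1_{(S_{i-1}^x, S_i^x]}(u) − x_i`. -/
noncomputable def Psi {d : ℕ} (x : Fin d → ℝ) (u : ℝ) (i : Fin d) : ℝ :=
  (if u ∈ Set.Ioc (partSum x (i : ℕ)) (partSum x ((i : ℕ) + 1)) then (1 : ℝ) else 0) - x i

lemma partSum_succ {d : ℕ} (x : Fin d → ℝ) (i : Fin d) :
    partSum x ((i : ℕ) + 1) = partSum x (i : ℕ) + x i := by
  unfold partSum
  rw [Finset.sum_filter, Finset.sum_filter]
  have h : ∀ j : Fin d, (if (j : ℕ) < (i : ℕ) + 1 then x j else 0)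
      = (if (j : ℕ) < (i : ℕ) then x j else 0) + (if j = i then x j else 0) := by
    intro j
    rcases lt_trichotomy (j : ℕ) (i : ℕ) with h | h | h
    · have hne : j ≠ i := fun hj => absurd (congrArg Fin.val hj) (Nat.ne_of_lt h)
      simp [h, Nat.lt_succ_of_lt h, hne]
    · have hji : j = i := Fin.ext h
      simp [hji, Nat.lt_irrefl]
    · have h1 : ¬ ((j : ℕ) < (i : ℕ) + 1) := by omega
      have h2 : ¬ ((j : ℕ) < (i : ℕ)) := by omega
      have h3 : j ≠ i := fun hj => by simp [hj] at h
      simp [h1, h2, h3]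
  rw [Finset.sum_congr rfl (fun j _ => h j), Finset.sum_add_distrib,
    Finset.sum_ite_eq' Finset.univ i x]
  simp

lemma partSum_nonneg {d : ℕ} {x : Fin d → ℝ} (hx : x ∈ stdSimplex ℝ (Fin d)) (k : ℕ) :
    0 ≤ partSum x k :=
  Finset.sum_nonneg fun j _ => hx.1 j

lemma partSum_le_one {d : ℕ} {x : Fin d → ℝ} (hx : x ∈ stdSimplex ℝ (Fin d)) (k : ℕ) :
    partSum x k ≤ 1 := by
  have := Finset.sum_le_sum_of_subset_of_nonneg
      (Finset.filter_subset (fun j : Fin d => (j : ℕ) < k) Finset.univ)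
      (fun j _ _ => hx.1 j)
  calc partSum x k ≤ ∑ j, x j := this
    _ = 1 := hx.2

/-- indicator of `Ioc a b` as an if. -/
lemma indFun_eq (a b : ℝ) :
    (fun u : ℝ => if u ∈ Set.Ioc a b then (1 : ℝ) else 0)
      = Set.indicator (Set.Ioc a b) (fun _ => (1 : ℝ)) := by
  funext u
  simp [Set.indicator_apply]

lemma indInt (a b : ℝ) :
    IntervalIntegrable (fun u : ℝ => if u ∈ Set.Ioc a b then (1 : ℝ) else 0) volume 0 1 := by
  rw [indFun_eq]
  refine MeasureTheory.Integrable.intervalIntegrable ?_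
  rw [MeasureTheory.integrable_indicator_iff measurableSet_Ioc]
  exact integrableOn_const measure_Ioc_lt_top.ne

lemma indVal (a b : ℝ) (h0 : 0 ≤ a) (hb : b ≤ 1) :
    ∫ u in (0:ℝ)..1, (if u ∈ Set.Ioc a b then (1 : ℝ) else 0) = max (b - a) 0 := by
  rcases le_total a b with hab | hab
  · have hsub : Set.Ioc a b ⊆ Set.Ioc (0:ℝ) 1 := Set.Ioc_subset_Ioc h0 hb
    rw [indFun_eq, intervalIntegral.integral_of_le zero_le_one,
      MeasureTheory.setIntegral_indicator measurableSet_Ioc]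
    rw [Set.inter_eq_right.2 hsub]
    simp [Real.volume_Ioc, ENNReal.toReal_ofReal (sub_nonneg.2 hab),
      max_eq_left (sub_nonneg.2 hab)]
  · have : Set.Ioc a b = ∅ := Set.Ioc_eq_empty (not_lt.2 hab)
    simp [this, max_eq_right (sub_nonpos.2 hab)]

lemma expandSq (a b a' b' cx cy : ℝ) (u : ℝ) :
    (((if u ∈ Set.Ioc a b then (1 : ℝ) else 0) - cx)
      - ((if u ∈ Set.Ioc a' b' then (1 : ℝ) else 0) - cy)) ^ 2
    = (1 - 2 * (cx - cy)) * (if u ∈ Set.Ioc a b then (1 : ℝ) else 0)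
      + (1 + 2 * (cx - cy)) * (if u ∈ Set.Ioc a' b' then (1 : ℝ) else 0)
      - 2 * (if u ∈ Set.Ioc (max a a') (min b b') then (1 : ℝ) else 0)
      + (cx - cy) ^ 2 := by
  have hint : (u ∈ Set.Ioc (max a a') (min b b')) ↔
      (u ∈ Set.Ioc a b ∧ u ∈ Set.Ioc a' b') := by
    simp only [Set.mem_Ioc, max_lt_iff, le_min_iff]
    tauto
  by_cases h1 : u ∈ Set.Ioc a b <;> by_cases h2 : u ∈ Set.Ioc a' b' <;>
    simp [h1, h2, hint] <;> ring

lemma perInt (px qx py qy : ℝ) (h0x : 0 ≤ px) (hxle : px ≤ qx) (h1x : qx ≤ 1)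
    (h0y : 0 ≤ py) (hyle : py ≤ qy) (h1y : qy ≤ 1) :
    ∫ u in (0:ℝ)..1,
      (((if u ∈ Set.Ioc px qx then (1 : ℝ) else 0) - (qx - px))
        - ((if u ∈ Set.Ioc py qy then (1 : ℝ) else 0) - (qy - py))) ^ 2
      ≤ |px - py| + |qx - qy| := by
  set c : ℝ := (qx - px) - (qy - py) with hc
  have hrw : ∀ u : ℝ, (((if u ∈ Set.Ioc px qx then (1 : ℝ) else 0) - (qx - px))
        - ((if u ∈ Set.Ioc py qy then (1 : ℝ) else 0) - (qy - py))) ^ 2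
      = (1 - 2 * c) * (if u ∈ Set.Ioc px qx then (1 : ℝ) else 0)
      + (1 + 2 * c) * (if u ∈ Set.Ioc py qy then (1 : ℝ) else 0)
      - 2 * (if u ∈ Set.Ioc (max px py) (min qx qy) then (1 : ℝ) else 0)
      + c ^ 2 := fun u => expandSq px qx py qy (qx - px) (qy - py) u
  rw [intervalIntegral.integral_congr (fun u _ => hrw u)]
  have i1 := (indInt px qx).const_mul (1 - 2 * c)
  have i2 := (indInt py qy).const_mul (1 + 2 * c)
  have i3 := (indInt (max px py) (min qx qy)).const_mul (2 : ℝ)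
  have e1 : ∫ u in (0:ℝ)..1, (1 - 2 * c) * (if u ∈ Set.Ioc px qx then (1:ℝ) else 0)
      = (1 - 2 * c) * (qx - px) := by
    rw [intervalIntegral.integral_const_mul, indVal px qx h0x h1x,
      max_eq_left (sub_nonneg.2 hxle)]
  have e2 : ∫ u in (0:ℝ)..1, (1 + 2 * c) * (if u ∈ Set.Ioc py qy then (1:ℝ) else 0)
      = (1 + 2 * c) * (qy - py) := by
    rw [intervalIntegral.integral_const_mul, indVal py qy h0y h1y,
      max_eq_left (sub_nonneg.2 hyle)]
  have e3 : ∫ u in (0:ℝ)..1, 2 * (if u ∈ Set.Ioc (max px py) (min qx qy) then (1:ℝ) else 0)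
      = 2 * max (min qx qy - max px py) 0 := by
    rw [intervalIntegral.integral_const_mul,
      indVal _ _ (le_trans h0x (le_max_left _ _)) (le_trans (min_le_left _ _) h1x)]
  rw [intervalIntegral.integral_add ((i1.add i2).sub i3) intervalIntegrable_const,
    intervalIntegral.integral_sub (i1.add i2) i3,
    intervalIntegral.integral_add i1 i2, e1, e2, e3, intervalIntegral.integral_const]
  simp only [smul_eq_mul, sub_zero, one_mul]
  have key : (1 - 2*c)*(qx-px) + (1+2*c)*(qy-py)
      - 2 * max (min qx qy - max px py) 0 + c^2
      = (qx-px) + (qy-py) - c^2 - 2 * max (min qx qy - max px py) 0 := by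
    rw [hc]; ring
  rw [key, abs_sub_comm px py, abs_sub_comm qx qy]
  have f1 := min_add_max px py
  have f2 := min_add_max qx qy
  have f3 := max_sub_min_eq_abs px py
  have f4 := max_sub_min_eq_abs qx qy
  rcases le_total (min qx qy - max px py) 0 with h | h
  · rw [max_eq_right h]
    nlinarith [sq_nonneg c]
  · rw [max_eq_left h]
    nlinarith [sq_nonneg c]

lemma sqIntble (a b a' b' cx cy : ℝ) :
    IntervalIntegrable (fun u : ℝ =>
      (((if u ∈ Set.Ioc a b then (1 : ℝ) else 0) - cx)
        - ((if u ∈ Set.Ioc a' b' then (1 : ℝ) else 0) - cy)) ^ 2) volume 0 1 := by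
  have : (fun u : ℝ =>
      (((if u ∈ Set.Ioc a b then (1 : ℝ) else 0) - cx)
        - ((if u ∈ Set.Ioc a' b' then (1 : ℝ) else 0) - cy)) ^ 2)
      = fun u : ℝ =>
      (1 - 2 * (cx - cy)) * (if u ∈ Set.Ioc a b then (1 : ℝ) else 0)
      + (1 + 2 * (cx - cy)) * (if u ∈ Set.Ioc a' b' then (1 : ℝ) else 0)
      - 2 * (if u ∈ Set.Ioc (max a a') (min b b') then (1 : ℝ) else 0)
      + (cx - cy) ^ 2 := funext fun u => expandSq a b a' b' cx cy u
  rw [this]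
  exact ((((indInt a b).const_mul _).add ((indInt a' b').const_mul _)).sub
    ((indInt _ _).const_mul 2)).add intervalIntegrable_const

lemma partSum_diff_le {d : ℕ} (x y : Fin d → ℝ) (k : ℕ) :
    |partSum x k - partSum y k| ≤ ∑ j, |x j - y j| := by
  unfold partSum
  rw [← Finset.sum_sub_distrib]
  refine (Finset.abs_sum_le_sum_abs _ _).trans ?_
  exact Finset.sum_le_sum_of_subset_of_nonneg (Finset.filter_subset _ _)
    (fun j _ _ => abs_nonneg _)

/-- For `x, y` in the simplex `S_d`,
`∫₀¹ ‖Ψ(u,x) − Ψ(u,y)‖₂² du ≤ 2 d^{3/2} ‖x − y‖₂`. -/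
theorem integral_sq_norm_Psi_sub_le
    (d : ℕ) (hd : 1 ≤ d) (x y : Fin d → ℝ)
    (hx : x ∈ stdSimplex ℝ (Fin d)) (hy : y ∈ stdSimplex ℝ (Fin d)) :
    ∫ u in (0:ℝ)..1, (∑ i, (Psi x u i - Psi y u i) ^ 2)
      ≤ 2 * (d : ℝ) ^ ((3 : ℝ) / 2) * Real.sqrt (∑ i, (x i - y i) ^ 2) := by
  have hxi : ∀ i : Fin d, x i = partSum x ((i:ℕ)+1) - partSum x (i:ℕ) := by
    intro i; rw [partSum_succ]; ring
  have hyi : ∀ i : Fin d, y i = partSum y ((i:ℕ)+1) - partSum y (i:ℕ) := by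
    intro i; rw [partSum_succ]; ring
  -- integrability of each summand
  have hible : ∀ i : Fin d, IntervalIntegrable
      (fun u => (Psi x u i - Psi y u i) ^ 2) volume 0 1 := by
    intro i
    simpa [Psi] using sqIntble (partSum x (i:ℕ)) (partSum x ((i:ℕ)+1))
      (partSum y (i:ℕ)) (partSum y ((i:ℕ)+1)) (x i) (y i)
  rw [intervalIntegral.integral_finset_sum (fun i _ => hible i)]
  -- per-coordinate bound
  have hper : ∀ i : Fin d, ∫ u in (0:ℝ)..1, (Psi x u i - Psi y u i) ^ 2
      ≤ |partSum x (i:ℕ) - partSum y (i:ℕ)|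
        + |partSum x ((i:ℕ)+1) - partSum y ((i:ℕ)+1)| := by
    intro i
    have := perInt (partSum x (i:ℕ)) (partSum x ((i:ℕ)+1))
      (partSum y (i:ℕ)) (partSum y ((i:ℕ)+1))
      (partSum_nonneg hx _) (by rw [partSum_succ]; linarith [hx.1 i])
      (partSum_le_one hx _)
      (partSum_nonneg hy _) (by rw [partSum_succ]; linarith [hy.1 i])
      (partSum_le_one hy _)
    refine le_trans (le_of_eq ?_) this
    refine intervalIntegral.integral_congr (fun u _ => ?_)
    simp only [Psi]
    rw [hxi i, hyi i]
  have hT : ∀ k : ℕ, |partSum x k - partSum y k|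
      ≤ Real.sqrt d * Real.sqrt (∑ i, (x i - y i) ^ 2) := by
    intro k
    refine (partSum_diff_le x y k).trans ?_
    have h1 : (∑ j, |x j - y j|) ^ 2 ≤ (d : ℝ) * ∑ j, (x j - y j) ^ 2 := by
      have := sq_sum_le_card_mul_sum_sq (s := Finset.univ) (f := fun j => |x j - y j|)
      simpa [sq_abs] using this
    have h2 : (∑ j, |x j - y j|) = Real.sqrt ((∑ j, |x j - y j|) ^ 2) := by
      rw [Real.sqrt_sq (Finset.sum_nonneg fun j _ => abs_nonneg _)]
    rw [h2, ← Real.sqrt_mul (by positivity)]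
    exact Real.sqrt_le_sqrt h1
  have hsum : ∑ i : Fin d, (|partSum x (i:ℕ) - partSum y (i:ℕ)|
        + |partSum x ((i:ℕ)+1) - partSum y ((i:ℕ)+1)|)
      ≤ (d : ℝ) * (2 * (Real.sqrt d * Real.sqrt (∑ i, (x i - y i) ^ 2))) := by
    calc ∑ i : Fin d, (|partSum x (i:ℕ) - partSum y (i:ℕ)|
        + |partSum x ((i:ℕ)+1) - partSum y ((i:ℕ)+1)|)
        ≤ ∑ _i : Fin d, (2 * (Real.sqrt d * Real.sqrt (∑ i, (x i - y i) ^ 2))) := by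
          refine Finset.sum_le_sum fun i _ => ?_
          have := hT (i:ℕ); have := hT ((i:ℕ)+1); linarith
      _ = (d : ℝ) * (2 * (Real.sqrt d * Real.sqrt (∑ i, (x i - y i) ^ 2))) := by
          simp [Finset.sum_const, Finset.card_univ]
  have hpow : (d : ℝ) ^ ((3:ℝ)/2) = (d : ℝ) * Real.sqrt d := by
    have hd0 : (0:ℝ) < d := by exact_mod_cast Nat.lt_of_lt_of_le Nat.zero_lt_one hd
    rw [show (3:ℝ)/2 = 1 + 1/2 by norm_num, Real.rpow_add hd0, Real.rpow_one,
      Real.sqrt_eq_rpow]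
  calc ∑ i : Fin d, ∫ u in (0:ℝ)..1, (Psi x u i - Psi y u i) ^ 2
      ≤ ∑ i : Fin d, (|partSum x (i:ℕ) - partSum y (i:ℕ)|
        + |partSum x ((i:ℕ)+1) - partSum y ((i:ℕ)+1)|) :=
        Finset.sum_le_sum fun i _ => hper i
    _ ≤ (d : ℝ) * (2 * (Real.sqrt d * Real.sqrt (∑ i, (x i - y i) ^ 2))) := hsum
    _ = 2 * (d : ℝ) ^ ((3:ℝ)/2) * Real.sqrt (∑ i, (x i - y i) ^ 2) := by
        rw [hpow]; ring
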